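/- Let b ≠ 0, 1 < α ≤ 2, and let u₀ ∈ L¹(ℝ) satisfy |u₀(x)| ≤ C₀(1+|x|)^{-α} for all x ∈ ℝ and some C₀ > 0. Set δ = ∫_ℝ u₀(x)dx and let χ_* be the self-similar profile with mass δ. Define w₀(x) ≡ exp(−(b/2)∫_{-∞}^x u₀(y)dy) − exp(−(b/2)∫_{-∞}^x χ_*(y)dy). Then there exists a constant C > 0 such that |w₀(x)| ≤ C(1+|x|)^{-(α-1)} for all x ∈ ℝ. -/

import Mathlib

open MeasureTheory Real Filter intervalIntegral

noncomputable section

/-- Green function `S(x,t)` of the linearized generalized KdV–Burgers equation: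
the inverse Fourier transform (in the convention `𝓕⁻¹[g](x) = (2π)^{-1/2} ∫ e^{ixξ} g(ξ) dξ`)
of `ξ ↦ exp(-t ξ² + i t k ξ³)`. -/
def greenS (k t x : ℝ) : ℂ :=
  ((Real.sqrt (2 * Real.pi) : ℝ) : ℂ)⁻¹ *
    ∫ ξ : ℝ, Complex.exp (Complex.I * x * ξ) *
      Complex.exp (-(t : ℂ) * ξ ^ 2 + Complex.I * t * k * ξ ^ 3)

/-- Self-similar profile `χ_*` with mass `δ`. -/
def chiStar (b δ x : ℝ) : ℝ :=
  (1 / b) * ((Real.exp (b * δ / 2) - 1) * Real.exp (-x ^ 2 / 4)) /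
    (Real.sqrt Real.pi + (Real.exp (b * δ / 2) - 1) * ∫ y in Set.Ioi (x / 2), Real.exp (-y ^ 2))

/-- Nonlinear diffusion wave `χ(x,t) = (1+t)^{-1/2} χ_*(x/√(1+t))`. -/
def chi (b δ t x : ℝ) : ℝ := (1 + t) ^ (-(1 : ℝ) / 2) * chiStar b δ (x / Real.sqrt (1 + t))

/-- `η_*(x) = exp((b/2)∫_{-∞}^x χ_*(y) dy)`. -/
def etaStar (b δ x : ℝ) : ℝ := Real.exp ((b / 2) * ∫ y in Set.Iio x, chiStar b δ y)

/-- `η(x,t) = η_*(x/√(1+t)) = exp((b/2)∫_{-∞}^x χ(y,t) dy)`. -/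
def etaFun (b δ t x : ℝ) : ℝ := etaStar b δ (x / Real.sqrt (1 + t))

/-- Heat kernel `G(x,t)`. -/
def heatG (t x : ℝ) : ℝ := (Real.sqrt (4 * Real.pi * t))⁻¹ * Real.exp (-x ^ 2 / (4 * t))

/-- `U[h](x,t,τ) = ∫ ∂ₓ(G(x−y,t−τ)η(x,t)) η(y,τ)⁻¹ (∫_{-∞}^y h) dy`. -/
def Uker (b δ : ℝ) (h : ℝ → ℝ) (x t τ : ℝ) : ℝ :=
  ∫ y : ℝ, deriv (fun x' => heatG (t - τ) (x' - y) * etaFun b δ t x') x *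
    (etaFun b δ τ y)⁻¹ * ∫ ξ in Set.Iio y, h ξ

/-- Second asymptotic profile `Z(x,t)` with constants `cp = c_α⁺`, `cm = c_α⁻`. -/
def Zprof (b δ cp cm α : ℝ) (t x : ℝ) : ℝ :=
  ∫ y : ℝ, (if 0 ≤ y then cp else cm) *
    deriv (fun x' => heatG t (x' - y) * etaFun b δ t x') x * (1 + |y|) ^ (-(α - 1))

/-- `d = ∫ η_*(y)⁻¹ χ_*(y)³ dy`. -/
def dConst (b δ : ℝ) : ℝ := ∫ y : ℝ, (etaStar b δ y)⁻¹ * (chiStar b δ y) ^ 3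

/-- `V_*(x) = (bχ_*(x) − x)e^{-x²/4} η_*(x)`. -/
def Vstar (b δ x : ℝ) : ℝ := (b * chiStar b δ x - x) * Real.exp (-x ^ 2 / 4) * etaStar b δ x

/-- Second asymptotic profile `V(x,t)`. -/
def Vprof (b c k δ t x : ℝ) : ℝ :=
  -(dConst b δ / (4 * Real.sqrt Real.pi)) * (b ^ 2 * k / 8 + c / 3) *
    Vstar b δ (x / Real.sqrt (1 + t)) * (1 + t)⁻¹ * Real.log (1 + t)

/-- The mild (Duhamel) formulation of the generalized KdV–Burgers equation
`u_t + ((b/2)u² + (c/3)u³)_x + k u_{xxx} = u_{xx}`, `u(·,0) = u₀`. -/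
def IsMildSolution (b c k : ℝ) (u₀ : ℝ → ℝ) (u : ℝ → ℝ → ℝ) : Prop :=
  (∀ x, u 0 x = u₀ x) ∧
  ∀ t > (0 : ℝ), ∀ x : ℝ,
    (u t x : ℂ) = (∫ y : ℝ, greenS k t (x - y) * (u₀ y : ℂ)) -
      ∫ τ in (0 : ℝ)..t, ∫ y : ℝ,
        deriv (fun z => greenS k (t - τ) z) (x - y) *
          ((b / 2 : ℂ) * (u τ y : ℂ) ^ 2 + (c / 3 : ℂ) * (u τ y : ℂ) ^ 3)

/-- A global solution of the generalized KdV–Burgers equation in `C⁰([0,∞); Hˢ)`. -/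
def IsGlobalSolution (s : ℕ) (b c k : ℝ) (u₀ : ℝ → ℝ) (u : ℝ → ℝ → ℝ) : Prop :=
  (∀ t, 0 ≤ t → ContDiff ℝ s (u t) ∧ ∀ j ≤ s, MemLp (iteratedDeriv j (u t)) 2 volume) ∧
  Continuous (fun p : ℝ × ℝ => u p.1 p.2) ∧
  IsMildSolution b c k u₀ u

/-- `w₀(x) = exp(−(b/2)∫_{-∞}^x u₀) − exp(−(b/2)∫_{-∞}^x χ_*)`, with `δ = ∫ u₀`. -/
def w0 (b : ℝ) (u₀ : ℝ → ℝ) (x : ℝ) : ℝ :=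
  Real.exp (-(b / 2) * ∫ y in Set.Iio x, u₀ y) -
    Real.exp (-(b / 2) * ∫ y in Set.Iio x, chiStar b (∫ z : ℝ, u₀ z) y)

/-- `w(x,t) = exp(−(b/2)∫_{-∞}^x u(y,t)dy) − η(x,t)⁻¹`, with `δ = ∫ u₀`. -/
def wFun (b : ℝ) (u₀ : ℝ → ℝ) (u : ℝ → ℝ → ℝ) (t x : ℝ) : ℝ :=
  Real.exp (-(b / 2) * ∫ y in Set.Iio x, u t y) - (etaFun b (∫ y : ℝ, u₀ y) t x)⁻¹

end


noncomputable section Helpers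

open Set Topology

private lemma gauss_int : Integrable (fun y : ℝ => Real.exp (-y ^ 2)) := by
  have := integrable_exp_neg_mul_sq (show (0:ℝ) < 1 by norm_num)
  simpa using this

private lemma gauss_tot : ∫ y : ℝ, Real.exp (-y ^ 2) = Real.sqrt Real.pi := by
  simpa using integral_gaussian 1

private noncomputable def Psi (c : ℝ) : ℝ := ∫ y in Iic c, Real.exp (-y ^ 2)

private lemma Psi_deriv (c : ℝ) : HasDerivAt Psi (Real.exp (-c ^ 2)) c := by
  have key : ∀ d : ℝ, Psi d = Psi 0 + ∫ y in (0:ℝ)..d, Real.exp (-y ^ 2) := by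
    intro d
    have := intervalIntegral.integral_Iic_sub_Iic gauss_int.integrableOn gauss_int.integrableOn
      (a := 0) (b := d)
    unfold Psi; linarith
  have h1 : HasDerivAt (fun d : ℝ => ∫ y in (0:ℝ)..d, Real.exp (-y ^ 2))
      (Real.exp (-c ^ 2)) c := by
    have hcont : Continuous fun y : ℝ => Real.exp (-y ^ 2) :=
      Real.continuous_exp.comp (by continuity)
    exact intervalIntegral.integral_hasDerivAt_right gauss_int.intervalIntegrable
      (hcont.stronglyMeasurableAtFilter _ _) hcont.continuousAt
  have h2 := h1.const_add (Psi 0)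
  have : (fun d : ℝ => Psi 0 + ∫ y in (0:ℝ)..d, Real.exp (-y ^ 2)) = Psi := by
    funext d; rw [key d]
  rwa [this] at h2

private lemma Psi_nonneg (c : ℝ) : 0 ≤ Psi c :=
  setIntegral_nonneg measurableSet_Iic fun y _ => (Real.exp_pos _).le

private lemma Psi_le (c : ℝ) : Psi c ≤ Real.sqrt Real.pi := by
  rw [← gauss_tot]
  exact setIntegral_le_integral gauss_int (ae_of_all _ fun _ => (Real.exp_pos _).le)

private lemma Ioi_eq (c : ℝ) :
    ∫ y in Ioi c, Real.exp (-y ^ 2) = Real.sqrt Real.pi - Psi c := by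
  have := intervalIntegral.integral_Iic_add_Ioi (b := c) gauss_int.integrableOn
    gauss_int.integrableOn
  rw [gauss_tot] at this
  unfold Psi; linarith

private lemma Psi_tendsto_bot : Tendsto Psi atBot (𝓝 0) := by
  have hb : ∀ᶠ c in atBot, Psi c ≤ Real.exp c := by
    filter_upwards [Iic_mem_atBot (-1 : ℝ)] with c hc
    have : Psi c ≤ ∫ y in Iic c, Real.exp y := by
      apply setIntegral_mono_on gauss_int.integrableOn
        (integrableOn_exp_Iic c) measurableSet_Iic
      intro y hy
      have hy1 : y ≤ -1 := le_trans hy hc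
      apply Real.exp_le_exp.2; nlinarith
    rwa [integral_exp_Iic] at this
  have h0 : ∀ᶠ c in atBot, 0 ≤ Psi c := Eventually.of_forall Psi_nonneg
  exact squeeze_zero' h0 hb Real.tendsto_exp_atBot

private noncomputable def thet (b δ : ℝ) : ℝ := Real.exp (b * δ / 2) - 1

private noncomputable def Fden (b δ x : ℝ) : ℝ :=
  Real.sqrt Real.pi + thet b δ * ∫ y in Ioi (x / 2), Real.exp (-y ^ 2)

private noncomputable def mlow (b δ : ℝ) : ℝ :=
  Real.sqrt Real.pi * min 1 (Real.exp (b * δ / 2))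

private lemma sqrt_pi_pos : (0:ℝ) < Real.sqrt Real.pi := Real.sqrt_pos.2 Real.pi_pos

private lemma mlow_pos (b δ : ℝ) : 0 < mlow b δ :=
  mul_pos sqrt_pi_pos (lt_min one_pos (Real.exp_pos _))

private lemma Fden_eq (b δ x : ℝ) :
    Fden b δ x = Real.sqrt Real.pi + thet b δ * (Real.sqrt Real.pi - Psi (x/2)) := by
  unfold Fden; rw [Ioi_eq]

private lemma Fden_ge (b δ x : ℝ) : mlow b δ ≤ Fden b δ x := by
  rw [Fden_eq]
  have h1 := Psi_nonneg (x/2)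
  have h2 := Psi_le (x/2)
  have hsp := sqrt_pi_pos
  rcases le_or_gt 0 (thet b δ) with h | h
  · have : mlow b δ ≤ Real.sqrt Real.pi :=
      mul_le_of_le_one_right hsp.le (min_le_left _ _)
    nlinarith
  · have hθ : thet b δ = Real.exp (b * δ / 2) - 1 := rfl
    have : mlow b δ ≤ Real.sqrt Real.pi * Real.exp (b * δ / 2) :=
      mul_le_mul_of_nonneg_left (min_le_right _ _) hsp.le
    nlinarith [Real.exp_pos (b * δ / 2)]

private lemma Fden_pos (b δ x : ℝ) : 0 < Fden b δ x :=
  lt_of_lt_of_le (mlow_pos b δ) (Fden_ge b δ x)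

private lemma Fden_deriv (b δ x : ℝ) :
    HasDerivAt (Fden b δ) (-(thet b δ * Real.exp (-x ^ 2 / 4)) / 2) x := by
  have h1 : HasDerivAt (fun x : ℝ => x / 2) (1/2 : ℝ) x := by
    simpa using (hasDerivAt_id x).div_const 2
  have h2 := ((Psi_deriv (x/2)).comp x h1).const_sub (Real.sqrt Real.pi)
  have h3 := (h2.const_mul (thet b δ)).const_add (Real.sqrt Real.pi)
  have h4 : HasDerivAt (Fden b δ) (thet b δ * -(Real.exp (-(x/2) ^ 2) * (1/2))) x := by
    have heq : (fun x : ℝ => Real.sqrt Real.pi + thet b δ * (Real.sqrt Real.pi - Psi (x/2)))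
        = Fden b δ := by funext z; rw [Fden_eq]
    rw [← heq]
    exact h3
  convert h4 using 1
  rw [show -(x/2)^2 = -x^2/4 by ring]
  ring

private noncomputable def Hfun (b δ x : ℝ) : ℝ := (-2 / b) * Real.log (Fden b δ x)

private lemma chiStar_def (b δ x : ℝ) : chiStar b δ x =
    (1 / b) * ((Real.exp (b * δ / 2) - 1) * Real.exp (-x ^ 2 / 4)) / Fden b δ x := rfl

private lemma Hfun_deriv (b δ : ℝ) (hb : b ≠ 0) (x : ℝ) :
    HasDerivAt (Hfun b δ) (chiStar b δ x) x := by
  have h1 := ((Fden_deriv b δ x).log (Fden_pos b δ x).ne').const_mul (-2 / b)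
  refine h1.congr_deriv ?_
  rw [chiStar_def]
  have hF := (Fden_pos b δ x).ne'
  field_simp [thet]
  unfold thet; ring

private lemma exp_neg_intOn (c : ℝ) : IntegrableOn (fun x : ℝ => Real.exp (-x)) (Ioi c) := by
  have hderiv : ∀ x ∈ Ici c, HasDerivAt (fun x : ℝ => -Real.exp (-x)) (Real.exp (-x)) x := by
    intro x _
    exact (((Real.hasDerivAt_exp (-x)).comp x ((hasDerivAt_id x).neg)).neg).congr_deriv (by simp)
  have htend : Tendsto (fun x : ℝ => -Real.exp (-x)) atTop (𝓝 0) := by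
    have := (Real.tendsto_exp_atBot.comp tendsto_neg_atTop_atBot).neg
    simpa using this
  exact integrableOn_Ioi_deriv_of_nonneg' hderiv (fun x _ => (Real.exp_pos _).le) htend

private lemma gauss_Ioi_tendsto_top :
    Tendsto (fun x : ℝ => ∫ y in Ioi (x / 2), Real.exp (-y ^ 2)) atTop (𝓝 0) := by
  have hb : ∀ᶠ x : ℝ in atTop, (∫ y in Ioi (x / 2), Real.exp (-y ^ 2)) ≤ Real.exp (-(x/2)) := by
    filter_upwards [Ici_mem_atTop (2 : ℝ)] with x hx
    have hx2 : (1:ℝ) ≤ x / 2 := by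
      simp only [mem_Ici] at hx; linarith
    have h1 : (∫ y in Ioi (x / 2), Real.exp (-y ^ 2)) ≤ ∫ y in Ioi (x / 2), Real.exp (-y) := by
      apply setIntegral_mono_on gauss_int.integrableOn (exp_neg_intOn _) measurableSet_Ioi
      intro y hy
      have : (1:ℝ) ≤ y := le_trans hx2 (le_of_lt hy)
      apply Real.exp_le_exp.2; nlinarith
    rwa [integral_exp_neg_Ioi] at h1
  have h0 : ∀ᶠ x : ℝ in atTop, 0 ≤ ∫ y in Ioi (x / 2), Real.exp (-y ^ 2) :=
    Eventually.of_forall fun x =>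
      setIntegral_nonneg measurableSet_Ioi fun y _ => (Real.exp_pos _).le
  have hexp : Tendsto (fun x : ℝ => Real.exp (-(x/2))) atTop (𝓝 0) :=
    Real.tendsto_exp_atBot.comp
      (tendsto_neg_atTop_atBot.comp (tendsto_id.atTop_div_const two_pos))
  exact squeeze_zero' h0 hb hexp

private lemma Fden_tendsto_top (b δ : ℝ) :
    Tendsto (Fden b δ) atTop (𝓝 (Real.sqrt Real.pi)) := by
  have := ((gauss_Ioi_tendsto_top).const_mul (thet b δ)).const_add (Real.sqrt Real.pi)
  simp at this; exact this

private lemma Fden_tendsto_bot (b δ : ℝ) :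
    Tendsto (Fden b δ) atBot (𝓝 (Real.sqrt Real.pi * Real.exp (b * δ / 2))) := by
  have h1 : Tendsto (fun x : ℝ => Psi (x/2)) atBot (𝓝 0) :=
    Psi_tendsto_bot.comp (tendsto_id.atBot_div_const two_pos)
  have h2 := ((h1.const_sub (Real.sqrt Real.pi)).const_mul (thet b δ)).const_add
    (Real.sqrt Real.pi)
  have heq : (fun x : ℝ => Real.sqrt Real.pi + thet b δ * (Real.sqrt Real.pi - Psi (x/2)))
      = Fden b δ := by funext z; rw [Fden_eq]
  rw [heq] at h2
  have heq2 : Real.sqrt Real.pi * Real.exp (b * δ / 2)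
      = Real.sqrt Real.pi + thet b δ * (Real.sqrt Real.pi - 0) := by unfold thet; ring
  rw [heq2]; exact h2

private lemma Hfun_tendsto_top (b δ : ℝ) :
    Tendsto (Hfun b δ) atTop (𝓝 ((-2 / b) * Real.log (Real.sqrt Real.pi))) :=
  (((Real.continuousAt_log sqrt_pi_pos.ne').tendsto).comp (Fden_tendsto_top b δ)).const_mul _

private lemma Hfun_tendsto_bot (b δ : ℝ) :
    Tendsto (Hfun b δ) atBot
      (𝓝 ((-2 / b) * Real.log (Real.sqrt Real.pi * Real.exp (b * δ / 2)))) :=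
  (((Real.continuousAt_log (mul_pos sqrt_pi_pos (Real.exp_pos _)).ne').tendsto).comp
    (Fden_tendsto_bot b δ)).const_mul _

private lemma chiStar_bound (b δ x : ℝ) :
    |chiStar b δ x| ≤ |thet b δ| / (|b| * mlow b δ) * Real.exp (-x ^ 2 / 4) := by
  by_cases hb : b = 0
  · simp only [chiStar, hb, div_zero, one_div, inv_zero, zero_mul, zero_div, abs_zero]
    positivity
  rw [chiStar_def]
  have hF := Fden_pos b δ x
  have hm := mlow_pos b δ
  have hFg := Fden_ge b δ x
  have he := Real.exp_pos (-x ^ 2 / 4)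
  have hb' : (0:ℝ) < |b| := abs_pos.2 hb
  have habs : |(1 / b) * ((Real.exp (b * δ / 2) - 1) * Real.exp (-x ^ 2 / 4)) / Fden b δ x|
      = (1 / |b|) * (|thet b δ| * Real.exp (-x ^ 2 / 4)) / Fden b δ x := by
    rw [abs_div, abs_mul, abs_mul, abs_of_pos he, abs_of_pos hF, abs_one_div]
    rfl
  rw [habs]
  calc (1 / |b|) * (|thet b δ| * Real.exp (-x ^ 2 / 4)) / Fden b δ x
      ≤ (1 / |b|) * (|thet b δ| * Real.exp (-x ^ 2 / 4)) / mlow b δ :=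
        div_le_div_of_nonneg_left (by positivity) hm hFg
    _ = |thet b δ| / (|b| * mlow b δ) * Real.exp (-x ^ 2 / 4) := by
        field_simp

private lemma Fden_cont (b δ : ℝ) : Continuous (Fden b δ) := by
  rw [continuous_iff_continuousAt]
  exact fun x => (Fden_deriv b δ x).continuousAt

private lemma chiStar_cont (b δ : ℝ) : Continuous (chiStar b δ) := by
  have h1 : Continuous fun x : ℝ =>
      (1 / b) * ((Real.exp (b * δ / 2) - 1) * Real.exp (-x ^ 2 / 4)) :=
    continuous_const.mul (continuous_const.mul (Real.continuous_exp.comp (by continuity)))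
  have : chiStar b δ = fun x =>
      (1 / b) * ((Real.exp (b * δ / 2) - 1) * Real.exp (-x ^ 2 / 4)) / Fden b δ x := rfl
  rw [this]
  exact h1.div (Fden_cont b δ) fun x => (Fden_pos b δ x).ne'

private lemma gauss4_int : Integrable (fun x : ℝ => Real.exp (-x ^ 2 / 4)) := by
  have := integrable_exp_neg_mul_sq (show (0:ℝ) < 1/4 by norm_num)
  exact this.congr (ae_of_all _ fun x => by ring_nf)

private lemma chiStar_integrable (b δ : ℝ) : Integrable (chiStar b δ) := by
  apply Integrable.mono' ((gauss4_int).const_mul (|thet b δ| / (|b| * mlow b δ)))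
    (chiStar_cont b δ).aestronglyMeasurable
  exact ae_of_all _ fun x => by simpa [Real.norm_eq_abs] using chiStar_bound b δ x

private lemma chiStar_total (b δ : ℝ) (hb : b ≠ 0) : ∫ x : ℝ, chiStar b δ x = δ := by
  rw [integral_of_hasDerivAt_of_tendsto (Hfun_deriv b δ hb) (chiStar_integrable b δ)
    (Hfun_tendsto_bot b δ) (Hfun_tendsto_top b δ)]
  rw [Real.log_mul sqrt_pi_pos.ne' (Real.exp_pos _).ne', Real.log_exp]
  field_simp
  ring

private lemma pow_tail {α : ℝ} (hα1 : 1 < α) (x : ℝ) (hx : 0 ≤ x) :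
    IntegrableOn (fun y : ℝ => (1+y) ^ (-α)) (Ioi x) ∧
      ∫ y in Ioi x, (1+y) ^ (-α) = (1+x) ^ (-(α-1)) / (α-1) := by
  have hα0 : (0:ℝ) < α - 1 := by linarith
  set g : ℝ → ℝ := fun y => -((1+y) ^ (-(α-1))) / (α-1) with hg
  have hderiv : ∀ y ∈ Ici x, HasDerivAt g ((1+y) ^ (-α)) y := by
    intro y hy
    have hy0 : (0:ℝ) < 1 + y := by simp only [mem_Ici] at hy; linarith
    have h1 : HasDerivAt (fun y : ℝ => 1 + y) 1 y := by
      simpa using (hasDerivAt_id y).const_add 1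
    have h2 := (Real.hasDerivAt_rpow_const (x := 1 + y) (p := -(α-1))
      (Or.inl hy0.ne')).comp y h1
    have h3 := (h2.neg).div_const (α-1)
    refine h3.congr_deriv ?_
    rw [show -(α-1) - 1 = -α by ring]
    field_simp
  have hnonneg : ∀ y ∈ Ioi x, (0:ℝ) ≤ (1+y) ^ (-α) := by
    intro y hy
    exact Real.rpow_nonneg (by simp only [mem_Ioi] at hy; linarith) _
  have htend : Tendsto g atTop (𝓝 0) := by
    have h1 : Tendsto (fun y : ℝ => 1 + y) atTop atTop :=
      tendsto_atTop_add_const_left _ 1 tendsto_id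
    have h2 : Tendsto (fun y : ℝ => (1+y) ^ (-(α-1))) atTop (𝓝 0) :=
      (tendsto_rpow_neg_atTop hα0).comp h1
    have := (h2.neg).div_const (α-1)
    simpa only [neg_zero, zero_div] using this
  have hint := integrableOn_Ioi_deriv_of_nonneg' hderiv hnonneg htend
  refine ⟨hint, ?_⟩
  rw [integral_Ioi_of_hasDerivAt_of_nonneg' hderiv hnonneg htend]
  simp [hg]; ring

private lemma Mfun_integrable {α : ℝ} (hα1 : 1 < α) :
    Integrable (fun y : ℝ => (1 + |y|) ^ (-α)) := by
  have hIoi : IntegrableOn (fun y : ℝ => (1 + |y|) ^ (-α)) (Ioi 0) := by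
    apply ((pow_tail hα1 0 le_rfl).1).congr_fun ?_ measurableSet_Ioi
    intro y hy
    dsimp only
    rw [abs_of_pos hy]
  have hIic : IntegrableOn (fun y : ℝ => (1 + |y|) ^ (-α)) (Iic 0) := by
    rw [← Measure.map_neg_eq_self (volume : Measure ℝ)]
    have m : MeasurableEmbedding fun x : ℝ => -x :=
      (Homeomorph.neg ℝ).measurableEmbedding
    rw [m.integrableOn_map_iff]
    simp_rw [Function.comp_def, abs_neg, neg_preimage, neg_Iic, neg_zero]
    exact (integrableOn_Ici_iff_integrableOn_Ioi (by simp)).mpr hIoi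
  have := hIic.union hIoi
  rwa [Iic_union_Ioi, integrableOn_univ] at this

private lemma Mfun_tail_right {α : ℝ} (hα1 : 1 < α) (x : ℝ) (hx : 0 ≤ x) :
    ∫ y in Ici x, (1 + |y|) ^ (-α) = (1 + |x|) ^ (-(α-1)) / (α-1) := by
  rw [integral_Ici_eq_integral_Ioi, abs_of_nonneg hx]
  rw [← (pow_tail hα1 x hx).2]
  apply setIntegral_congr_fun measurableSet_Ioi
  intro y hy
  dsimp only
  rw [abs_of_pos (lt_of_le_of_lt hx hy)]

private lemma Mfun_tail_left {α : ℝ} (hα1 : 1 < α) (x : ℝ) (hx : x ≤ 0) :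
    ∫ y in Iio x, (1 + |y|) ^ (-α) = (1 + |x|) ^ (-(α-1)) / (α-1) := by
  rw [← integral_Iic_eq_integral_Iio, abs_of_nonpos hx]
  have h1 : ∫ y in Iic x, (1 + |y|) ^ (-α) = ∫ y in Iic x, (1 + (-y)) ^ (-α) := by
    apply setIntegral_congr_fun measurableSet_Iic
    intro y hy
    dsimp only
    rw [abs_of_nonpos (le_trans hy hx)]
  rw [h1, integral_comp_neg_Iic x (fun y => (1+y) ^ (-α)),
    (pow_tail hα1 (-x) (by linarith)).2]

private lemma tail_bound {α : ℝ} (hα1 : 1 < α) (h : ℝ → ℝ) (hint : Integrable h) (D : ℝ)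
    (hD : ∀ y, |h y| ≤ D * (1 + |y|) ^ (-α)) (hzero : ∫ y, h y = 0) (x : ℝ) :
    |∫ y in Iio x, h y| ≤ D / (α-1) * (1 + |x|) ^ (-(α-1)) := by
  have habs : ∀ s : Set ℝ, MeasurableSet s →
      (∫ y in s, |h y|) ≤ D * ∫ y in s, (1 + |y|) ^ (-α) := by
    intro s hs
    rw [← MeasureTheory.integral_const_mul]
    exact setIntegral_mono_on hint.abs.integrableOn
      (((Mfun_integrable hα1).const_mul D).integrableOn) hs fun y _ => hD y
  rcases le_or_gt x 0 with hx | hx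
  · calc |∫ y in Iio x, h y| ≤ ∫ y in Iio x, |h y| := by
          simpa [Real.norm_eq_abs] using
            norm_integral_le_integral_norm (μ := volume.restrict (Iio x)) h
      _ ≤ D * ∫ y in Iio x, (1 + |y|) ^ (-α) := habs _ measurableSet_Iio
      _ = D / (α-1) * (1 + |x|) ^ (-(α-1)) := by
          rw [Mfun_tail_left hα1 x hx]; ring
  · have hsplit := intervalIntegral.integral_Iio_add_Ici (b := x) hint.integrableOn
      hint.integrableOn
    rw [hzero] at hsplit
    have : ∫ y in Iio x, h y = -∫ y in Ici x, h y := by linarith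
    rw [this, abs_neg]
    calc |∫ y in Ici x, h y| ≤ ∫ y in Ici x, |h y| := by
          simpa [Real.norm_eq_abs] using
            norm_integral_le_integral_norm (μ := volume.restrict (Ici x)) h
      _ ≤ D * ∫ y in Ici x, (1 + |y|) ^ (-α) := habs _ measurableSet_Ici
      _ = D / (α-1) * (1 + |x|) ^ (-(α-1)) := by
          rw [Mfun_tail_right hα1 x hx.le]; ring

private lemma exp_diff_bound (R a c : ℝ) (ha : |a| ≤ R) (hc : |c| ≤ R) :
    |Real.exp a - Real.exp c| ≤ Real.exp R * |a - c| := by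
  rcases le_total a c with h | h
  · rw [abs_of_nonpos (by simp [Real.exp_le_exp, h]), abs_of_nonpos (by linarith)]
    have key : Real.exp a = Real.exp c * Real.exp (a - c) := by
      rw [← Real.exp_add]; ring_nf
    nlinarith [Real.add_one_le_exp (a - c), Real.exp_pos c,
      mul_le_mul_of_nonneg_left (Real.exp_le_exp.2 (abs_le.1 hc).2)
        (show 0 ≤ c - a by linarith)]
  · rw [abs_of_nonneg (by simp [Real.exp_le_exp, h]), abs_of_nonneg (by linarith)]
    have key : Real.exp c = Real.exp a * Real.exp (c - a) := by
      rw [← Real.exp_add]; ring_nf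
    nlinarith [Real.add_one_le_exp (c - a), Real.exp_pos a,
      mul_le_mul_of_nonneg_left (Real.exp_le_exp.2 (abs_le.1 ha).2)
        (show 0 ≤ a - c by linarith)]

private lemma gauss_pow_bound {α : ℝ} (hα2 : α ≤ 2) (x : ℝ) :
    Real.exp (-x ^ 2 / 4) ≤ 8 * (1 + |x|) ^ (-α) := by
  have hbase : (1:ℝ) ≤ 1 + |x| := by simp [abs_nonneg]
  have hb0 : (0:ℝ) < 1 + |x| := by linarith
  have key : Real.exp (-x^2/4) * (1+|x|)^(2:ℕ) ≤ 8 := by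
    have h2 : (1 + x^2/8)^2 ≤ Real.exp (x^2/4) := by
      have h0 := Real.add_one_le_exp (x^2/8)
      have h3 : Real.exp (x^2/8) ^ 2 = Real.exp (x^2/4) := by
        rw [← Real.exp_nat_mul]; ring_nf
      nlinarith [Real.exp_pos (x^2/8), sq_nonneg x]
    have h4 : Real.exp (-x^2/4) = (Real.exp (x^2/4))⁻¹ := by
      rw [← Real.exp_neg]; ring_nf
    rw [h4]
    have hp := Real.exp_pos (x^2/4)
    rw [inv_mul_le_iff₀ hp]
    have hb : (1+|x|)^2 ≤ 2 + 2*x^2 := by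
      nlinarith [sq_abs x, abs_nonneg x, sq_nonneg (1 - |x|)]
    nlinarith [sq_nonneg x, sq_nonneg (1 - x^2/8)]
  have hrpow2 : (1 + |x|) ^ ((2:ℝ)) = (1 + |x|)^(2:ℕ) := by
    rw [← Real.rpow_natCast]; norm_num
  have step1 : Real.exp (-x^2/4) ≤ 8 * (1 + |x|) ^ (-(2:ℝ)) := by
    rw [Real.rpow_neg hb0.le, hrpow2]
    have key2 : Real.exp (-x^2/4) ≤ 8 / (1+|x|)^(2:ℕ) :=
      (le_div_iff₀ (by positivity)).2 key
    calc Real.exp (-x^2/4) ≤ 8 / (1+|x|)^(2:ℕ) := key2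
      _ = 8 * ((1+|x|)^(2:ℕ))⁻¹ := by ring
  calc Real.exp (-x^2/4) ≤ 8 * (1 + |x|) ^ (-(2:ℝ)) := step1
    _ ≤ 8 * (1 + |x|) ^ (-α) := by
        have := Real.rpow_le_rpow_of_exponent_le hbase (show -(2:ℝ) ≤ -α by linarith)
        linarith

end Helpers

/-- Estimate (3-8): `|w₀(x)| ≤ C(1+|x|)^{-(α-1)}` for slowly decaying data. -/
theorem stmt9 (b α : ℝ) (hb : b ≠ 0) (hα1 : 1 < α) (hα2 : α ≤ 2)
    (u₀ : ℝ → ℝ) (hInt : Integrable u₀ volume) (C₀ : ℝ) (hC₀ : 0 < C₀)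
    (hdecay : ∀ x : ℝ, |u₀ x| ≤ C₀ * (1 + |x|) ^ (-α)) :
    ∃ C > (0 : ℝ), ∀ x : ℝ, |w0 b u₀ x| ≤ C * (1 + |x|) ^ (-(α - 1)) := by
  set δ : ℝ := ∫ z : ℝ, u₀ z with hδ
  set χ : ℝ → ℝ := chiStar b δ with hχ
  have hχint : Integrable χ := chiStar_integrable b δ
  have hχtot : ∫ x : ℝ, χ x = δ := chiStar_total b δ hb
  set K : ℝ := |thet b δ| / (|b| * mlow b δ) with hK
  have hK0 : 0 ≤ K := by
    have := mlow_pos b δ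
    have := abs_pos.2 hb
    positivity
  -- pointwise bound on χ in power form
  have hχpow : ∀ y : ℝ, |χ y| ≤ 8 * K * (1 + |y|) ^ (-α) := by
    intro y
    calc |χ y| ≤ K * Real.exp (-y ^ 2 / 4) := chiStar_bound b δ y
      _ ≤ K * (8 * (1 + |y|) ^ (-α)) :=
          mul_le_mul_of_nonneg_left (gauss_pow_bound hα2 y) hK0
      _ = 8 * K * (1 + |y|) ^ (-α) := by ring
  -- the difference function
  set h : ℝ → ℝ := fun y => u₀ y - χ y with hh
  have hhint : Integrable h := hInt.sub hχint
  set D : ℝ := C₀ + 8 * K with hD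
  have hD0 : 0 < D := by positivity
  have hDb : ∀ y : ℝ, |h y| ≤ D * (1 + |y|) ^ (-α) := by
    intro y
    have h1 := hdecay y
    have h2 := hχpow y
    calc |h y| ≤ |u₀ y| + |χ y| := abs_sub _ _
      _ ≤ C₀ * (1 + |y|) ^ (-α) + 8 * K * (1 + |y|) ^ (-α) := add_le_add h1 h2
      _ = D * (1 + |y|) ^ (-α) := by ring
  have hzero : ∫ y : ℝ, h y = 0 := by
    rw [integral_sub hInt hχint, hχtot]
    simp [hδ]
  -- uniform bounds on the exponents
  set I₀ : ℝ := ∫ y : ℝ, |u₀ y| with hI₀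
  set I₁ : ℝ := ∫ y : ℝ, |χ y| with hI₁
  have hI₀0 : 0 ≤ I₀ := integral_nonneg fun y => abs_nonneg _
  have hI₁0 : 0 ≤ I₁ := integral_nonneg fun y => abs_nonneg _
  set R : ℝ := |b| / 2 * (I₀ + I₁) with hR
  have hPbound : ∀ x : ℝ, |∫ y in Set.Iio x, u₀ y| ≤ I₀ := by
    intro x
    calc |∫ y in Set.Iio x, u₀ y| ≤ ∫ y in Set.Iio x, |u₀ y| := by
          simpa [Real.norm_eq_abs] using
            norm_integral_le_integral_norm (μ := volume.restrict (Set.Iio x)) u₀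
      _ ≤ I₀ := setIntegral_le_integral hInt.abs (ae_of_all _ fun y => abs_nonneg _)
  have hΦbound : ∀ x : ℝ, |∫ y in Set.Iio x, χ y| ≤ I₁ := by
    intro x
    calc |∫ y in Set.Iio x, χ y| ≤ ∫ y in Set.Iio x, |χ y| := by
          simpa [Real.norm_eq_abs] using
            norm_integral_le_integral_norm (μ := volume.restrict (Set.Iio x)) χ
      _ ≤ I₁ := setIntegral_le_integral hχint.abs (ae_of_all _ fun y => abs_nonneg _)
  refine ⟨Real.exp R * (|b| / 2) * (D / (α - 1)), ?_, ?_⟩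
  · have hb' : (0:ℝ) < |b| := abs_pos.2 hb
    have : (0:ℝ) < α - 1 := by linarith
    positivity
  intro x
  have hsplit : ∫ y in Set.Iio x, h y =
      (∫ y in Set.Iio x, u₀ y) - ∫ y in Set.Iio x, χ y :=
    integral_sub hInt.integrableOn hχint.integrableOn
  set P : ℝ := ∫ y in Set.Iio x, u₀ y with hP
  set Φ : ℝ := ∫ y in Set.Iio x, χ y with hΦ
  have hw : w0 b u₀ x = Real.exp (-(b / 2) * P) - Real.exp (-(b / 2) * Φ) := rfl
  have ha1 : |(-(b / 2) * P)| ≤ R := by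
    rw [abs_mul, abs_neg, abs_div, abs_two]
    calc |b| / 2 * |P| ≤ |b| / 2 * I₀ :=
          mul_le_mul_of_nonneg_left (hPbound x) (by positivity)
      _ ≤ R := by rw [hR]; nlinarith [abs_nonneg b]
  have ha2 : |(-(b / 2) * Φ)| ≤ R := by
    rw [abs_mul, abs_neg, abs_div, abs_two]
    calc |b| / 2 * |Φ| ≤ |b| / 2 * I₁ :=
          mul_le_mul_of_nonneg_left (hΦbound x) (by positivity)
      _ ≤ R := by rw [hR]; nlinarith [abs_nonneg b]
  have hdiff : |(-(b / 2) * P) - (-(b / 2) * Φ)| = |b| / 2 * |P - Φ| := by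
    rw [show (-(b / 2) * P) - (-(b / 2) * Φ) = -(b/2) * (P - Φ) by ring,
      abs_mul, abs_neg, abs_div, abs_two]
  have htail : |P - Φ| ≤ D / (α - 1) * (1 + |x|) ^ (-(α - 1)) := by
    rw [← hsplit]
    exact tail_bound hα1 h hhint D hDb hzero x
  calc |w0 b u₀ x| = |Real.exp (-(b / 2) * P) - Real.exp (-(b / 2) * Φ)| := by rw [hw]
    _ ≤ Real.exp R * |(-(b / 2) * P) - (-(b / 2) * Φ)| := exp_diff_bound R _ _ ha1 ha2
    _ = Real.exp R * (|b| / 2) * |P - Φ| := by rw [hdiff]; ring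
    _ ≤ Real.exp R * (|b| / 2) * (D / (α - 1) * (1 + |x|) ^ (-(α - 1))) := by
        apply mul_le_mul_of_nonneg_left htail
        positivity
    _ = Real.exp R * (|b| / 2) * (D / (α - 1)) * (1 + |x|) ^ (-(α - 1)) := by ring
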